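/- If f is a k-tone function on (a,b) (k ≥ 1), then for any pairwise distinct points x_1 < y_1, …, x_{k} < y_{k}, x_{k+1} < y_{k+1} (meaning x_i < y_i for each i, with x_1,…,x_{k+1} pairwise distinct and y_1,…,y_{k+1} pairwise distinct, all in (a,b)), one has f^[k](x_1,…,x_{k+1}) ≤ f^[k](y_1,…,y_{k+1}). (Monotonicity of the k-th divided difference of a (k+1)-tone function in each variable.) -/

import Mathlib

noncomputable def divDiff (f : ℝ → ℝ) : (k : ℕ) → (Fin (k + 1) → ℝ) → ℝ
  | 0, x => f (x 0)
  | k + 1, x =>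
      (divDiff f k (fun i => x i.castSucc) - divDiff f k (fun i => x i.succ)) /
        (x 0 - x (Fin.last (k + 1)))

noncomputable def dds (f : ℝ → ℝ) (k : ℕ) (x : Fin (k + 1) → ℝ) : ℝ :=
  ∑ j, f (x j) / ∏ l ∈ Finset.univ.erase j, (x j - x l)

lemma dds_map (f : ℝ → ℝ) (m M : ℕ) (e : Fin (m + 1) ↪ Fin (M + 1)) (x : Fin (M + 1) → ℝ) :
    dds f m (x ∘ e) = ∑ J ∈ Finset.univ.map e,
      f (x J) / ∏ L ∈ (Finset.univ.map e).erase J, (x J - x L) := by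
  rw [Finset.sum_map]
  refine Finset.sum_congr rfl fun j _ => ?_
  rw [← Finset.map_erase, Finset.prod_map]
  rfl

lemma dds_perm (f : ℝ → ℝ) (k : ℕ) (σ : Equiv.Perm (Fin (k + 1))) (x : Fin (k + 1) → ℝ) :
    dds f k (x ∘ σ) = dds f k x := by
  have := dds_map f k k σ.toEmbedding x
  simpa [dds, Finset.map_univ_equiv] using this

lemma univ_map_castSuccEmb (k : ℕ) :
    (Finset.univ : Finset (Fin (k + 1))).map Fin.castSuccEmb =
      Finset.univ.erase (Fin.last (k + 1)) := by
  ext i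
  simp only [Finset.mem_map, Fin.coe_castSuccEmb, Finset.mem_univ, true_and,
    Finset.mem_erase, and_true]
  exact Fin.exists_castSucc_eq

lemma univ_map_succEmb (k : ℕ) :
    (Finset.univ : Finset (Fin (k + 1))).map (Fin.succEmb (k + 1)) =
      Finset.univ.erase 0 := by
  ext i
  simp only [Finset.mem_map, Finset.mem_univ, true_and, Finset.mem_erase, and_true,
    show ⇑(Fin.succEmb (k+1)) = Fin.succ from rfl]
  exact Fin.exists_succ_eq

set_option maxHeartbeats 1000000 in
lemma divDiff_eq_dds (f : ℝ → ℝ) : ∀ (k : ℕ) (x : Fin (k + 1) → ℝ),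
    Function.Injective x → divDiff f k x = dds f k x
  | 0, x, _ => by
      simp [divDiff, dds]
  | k + 1, x, hx => by
      have hfront := divDiff_eq_dds f k (fun i => x i.castSucc)
        (hx.comp (Fin.castSucc_injective _))
      have hback := divDiff_eq_dds f k (fun i => x i.succ)
        (hx.comp (Fin.succ_injective _))
      set L : Fin (k + 2) := Fin.last (k + 1) with hL
      have h0L : (0 : Fin (k + 2)) ≠ L := by
        simp [hL, Fin.ext_iff]
      have hsub : ∀ (J M : Fin (k + 2)), J ≠ M → x J - x M ≠ 0 :=
        fun J M h => sub_ne_zero.mpr (fun hh => h (hx hh))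
      have hP : ∀ (J : Fin (k + 2)) (s : Finset (Fin (k + 2))), J ∉ s →
          (∏ M ∈ s, (x J - x M)) ≠ 0 := by
        intro J s hJ
        refine Finset.prod_ne_zero_iff.mpr fun M hM => hsub J M fun h => hJ ?_
        rwa [h]
      set F : Fin (k + 2) → ℝ := fun J =>
        if J = L then 0 else f (x J) / ∏ M ∈ (Finset.univ.erase J).erase L, (x J - x M) with hF
      set B : Fin (k + 2) → ℝ := fun J =>
        if J = 0 then 0 else f (x J) / ∏ M ∈ (Finset.univ.erase J).erase 0, (x J - x M) with hB
      have hfrontsum : dds f k (fun i => x i.castSucc) = ∑ J, F J := by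
        have h1 : dds f k (x ∘ Fin.castSuccEmb) = ∑ J ∈ Finset.univ.erase L,
            f (x J) / ∏ M ∈ (Finset.univ.erase L).erase J, (x J - x M) := by
          rw [dds_map, univ_map_castSuccEmb]
        rw [show (fun i : Fin (k+1) => x i.castSucc) = x ∘ Fin.castSuccEmb from rfl, h1,
          ← Finset.add_sum_erase _ F (Finset.mem_univ L),
          show F L = 0 from if_pos rfl, zero_add]
        refine Finset.sum_congr rfl fun J hJ => ?_
        have hJL : J ≠ L := (Finset.mem_erase.mp hJ).1
        rw [show F J = f (x J) / ∏ M ∈ (Finset.univ.erase J).erase L, (x J - x M)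
            from if_neg hJL, Finset.erase_right_comm]
      have hbacksum : dds f k (fun i => x i.succ) = ∑ J, B J := by
        have h1 : dds f k (x ∘ Fin.succEmb (k+1)) = ∑ J ∈ Finset.univ.erase 0,
            f (x J) / ∏ M ∈ (Finset.univ.erase 0).erase J, (x J - x M) := by
          rw [dds_map, univ_map_succEmb]
        rw [show (fun i : Fin (k+1) => x i.succ) = x ∘ Fin.succEmb (k+1) from rfl, h1,
          ← Finset.add_sum_erase _ B (Finset.mem_univ 0),
          show B 0 = 0 from if_pos rfl, zero_add]
        refine Finset.sum_congr rfl fun J hJ => ?_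
        have hJ0 : J ≠ 0 := (Finset.mem_erase.mp hJ).1
        rw [show B J = f (x J) / ∏ M ∈ (Finset.univ.erase J).erase 0, (x J - x M)
            from if_neg hJ0, Finset.erase_right_comm]
      have key : ∀ J : Fin (k + 2),
          (f (x J) / ∏ M ∈ Finset.univ.erase J, (x J - x M)) * (x 0 - x L) = F J - B J := by
        intro J
        rcases eq_or_ne J 0 with rfl | hJ0
        · have hLmem : L ∈ Finset.univ.erase (0 : Fin (k + 2)) :=
            Finset.mem_erase.mpr ⟨h0L.symm, Finset.mem_univ _⟩
          rw [show F 0 = f (x 0) / ∏ M ∈ (Finset.univ.erase (0 : Fin (k+2))).erase L, (x 0 - x M)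
              from if_neg h0L, show B 0 = 0 from if_pos rfl, sub_zero,
            ← Finset.mul_prod_erase _ _ hLmem]
          have hQ := hP 0 ((Finset.univ.erase (0 : Fin (k+2))).erase L) (by simp)
          have hc := hsub 0 L h0L
          field_simp
        · rcases eq_or_ne J L with rfl | hJL
          · have h0mem : (0 : Fin (k + 2)) ∈ Finset.univ.erase L :=
              Finset.mem_erase.mpr ⟨h0L, Finset.mem_univ _⟩
            rw [show F L = 0 from if_pos rfl,
              show B L = f (x L) / ∏ M ∈ (Finset.univ.erase L).erase 0, (x L - x M)
                from if_neg h0L.symm, zero_sub,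
              ← Finset.mul_prod_erase _ _ h0mem]
            have hQ := hP L ((Finset.univ.erase L).erase (0 : Fin (k+2))) (by simp)
            have hc := hsub L 0 h0L.symm
            field_simp
            ring
          · have h0mem : (0 : Fin (k + 2)) ∈ Finset.univ.erase J :=
              Finset.mem_erase.mpr ⟨hJ0.symm, Finset.mem_univ _⟩
            have hLmem : L ∈ (Finset.univ.erase J).erase 0 :=
              Finset.mem_erase.mpr ⟨h0L.symm, Finset.mem_erase.mpr ⟨hJL.symm, Finset.mem_univ _⟩⟩
            have h0mem' : (0 : Fin (k + 2)) ∈ (Finset.univ.erase J).erase L :=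
              Finset.mem_erase.mpr ⟨h0L, h0mem⟩
            have hswap : ((Finset.univ.erase J).erase (0 : Fin (k+2))).erase L
                = ((Finset.univ.erase J).erase L).erase 0 := Finset.erase_right_comm
            rw [show F J = f (x J) / ∏ M ∈ (Finset.univ.erase J).erase L, (x J - x M)
                from if_neg hJL,
              show B J = f (x J) / ∏ M ∈ (Finset.univ.erase J).erase 0, (x J - x M)
                from if_neg hJ0,
              ← Finset.mul_prod_erase _ _ h0mem, ← Finset.mul_prod_erase _ _ hLmem,
              ← Finset.mul_prod_erase _ _ h0mem', hswap]
            have hQ := hP J (((Finset.univ.erase J).erase L).erase (0 : Fin (k+2))) (by simp)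
            have hc0 := hsub J 0 hJ0
            have hcL := hsub J L hJL
            field_simp
            ring
      rw [divDiff, hfront, hback, hfrontsum, hbacksum, ← Finset.sum_sub_distrib, ← hL,
        div_eq_iff (hsub 0 L h0L), dds, Finset.sum_mul]
      exact Finset.sum_congr rfl fun J _ => (key J).symm

lemma dds_step (f : ℝ → ℝ) (a b : ℝ) (k : ℕ)
    (htone : ∀ z : Fin (k + 2) → ℝ, Function.Injective z →
      (∀ i, z i ∈ Set.Ioo a b) → 0 ≤ divDiff f (k + 1) z)
    (u : Fin (k + 1) → ℝ) (i : Fin (k + 1)) (c : ℝ)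
    (hu : Function.Injective u) (hui : u i < c)
    (hc : ∀ j, j ≠ i → c ≠ u j)
    (hmem : ∀ j, u j ∈ Set.Ioo a b) (hcm : c ∈ Set.Ioo a b) :
    dds f k u ≤ dds f k (Function.update u i c) := by
  have hcne : ∀ j, c ≠ u j := by
    intro j
    rcases eq_or_ne j i with rfl | h
    · exact hui.ne'
    · exact hc j h
  set σ : Equiv.Perm (Fin (k + 1)) := Equiv.swap (Fin.last k) i with hσ
  set z : Fin (k + 2) → ℝ := Fin.cons c (u ∘ σ) with hzdef
  set v : Fin (k + 1) → ℝ := Function.update u i c with hvdef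
  have hvinj : Function.Injective v := by
    intro p q h
    by_cases hp : p = i <;> by_cases hq : q = i
    · rw [hp, hq]
    · rw [hvdef, hp] at h
      simp only [Function.update_self, Function.update_of_ne hq] at h
      exact absurd h (hcne q)
    · rw [hvdef, hq] at h
      simp only [Function.update_self, Function.update_of_ne hp] at h
      exact absurd h.symm (hcne p)
    · rw [hvdef] at h
      simp only [Function.update_of_ne hp, Function.update_of_ne hq] at h
      exact hu h
  have huσ : Function.Injective (u ∘ σ) := hu.comp σ.injective
  have hzinj : Function.Injective z := by
    rw [hzdef, Fin.cons_injective_iff]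
    refine ⟨?_, huσ⟩
    rintro ⟨j, hj⟩
    exact hcne (σ j) hj.symm
  have hzmem : ∀ j, z j ∈ Set.Ioo a b := by
    intro j
    induction j using Fin.cases with
    | zero => simpa [hzdef] using hcm
    | succ l => simpa [hzdef] using hmem (σ l)
  have h0 := htone z hzinj hzmem
  rw [divDiff] at h0
  have hz0 : z 0 = c := rfl
  have hzlast : z (Fin.last (k + 1)) = u i := by
    rw [← Fin.succ_last]
    show (u ∘ σ) (Fin.last k) = u i
    simp [hσ]
  have hback : (fun j : Fin (k + 1) => z j.succ) = u ∘ σ := by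
    funext j
    simp [hzdef]
  set τ : Fin (k + 1) → Fin (k + 1) := Fin.cons i (fun j : Fin k => σ j.castSucc) with hτ
  have hσcs : ∀ j : Fin k, σ j.castSucc ≠ i := by
    intro j h
    have : j.castSucc = Fin.last k := by
      have := σ.injective (a₁ := j.castSucc) (a₂ := Fin.last k)
      apply this
      rw [h, hσ, Equiv.swap_apply_left]
    exact absurd this (Fin.castSucc_lt_last j).ne
  have hτinj : Function.Injective τ := by
    rw [hτ, Fin.cons_injective_iff]
    refine ⟨?_, (σ.injective.comp (Fin.castSucc_injective _))⟩
    rintro ⟨j, hj⟩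
    exact hσcs j hj
  have hfront : (fun j : Fin (k + 1) => z j.castSucc) = v ∘ τ := by
    funext j
    induction j using Fin.cases with
    | zero =>
        show z (Fin.castSucc 0) = v (τ 0)
        rw [Fin.castSucc_zero]
        show c = v i
        simp [hvdef]
    | succ l =>
        show z l.succ.castSucc = v (τ l.succ)
        rw [← Fin.succ_castSucc]
        show (u ∘ σ) l.castSucc = v (τ l.succ)
        have h1 : τ l.succ = σ l.castSucc := by rw [hτ]; exact Fin.cons_succ _ _ l
        rw [h1, hvdef]
        exact (Function.update_of_ne (hσcs l) _ _).symm
  rw [hfront, hback, hz0, hzlast, le_div_iff₀ (by linarith : (0:ℝ) < c - u i)] at h0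
  rw [zero_mul, sub_nonneg] at h0
  have e1 : dds f k u = divDiff f k (u ∘ σ) := by
    rw [divDiff_eq_dds f k _ huσ, dds_perm]
  have e2 : divDiff f k (v ∘ τ) = dds f k v := by
    have hbij := (Finite.injective_iff_bijective).mp hτinj
    have : v ∘ τ = v ∘ (Equiv.ofBijective τ hbij) := rfl
    rw [this, divDiff_eq_dds f k _ (hvinj.comp (Equiv.ofBijective τ hbij).injective), dds_perm]
  rw [e1]
  calc divDiff f k (u ∘ σ) ≤ divDiff f k (v ∘ τ) := h0
    _ = dds f k v := e2

theorem divDiff_mono_of_ktone (f : ℝ → ℝ) (a b : ℝ) (k : ℕ) (hk : 1 ≤ k)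
    (htone : ∀ z : Fin (k + 2) → ℝ, Function.Injective z →
      (∀ i, z i ∈ Set.Ioo a b) → 0 ≤ divDiff f (k + 1) z)
    (x y : Fin (k + 1) → ℝ) (hx : Function.Injective x) (hy : Function.Injective y)
    (hxm : ∀ i, x i ∈ Set.Ioo a b) (hym : ∀ i, y i ∈ Set.Ioo a b)
    (hxy : ∀ i, x i < y i) :
    divDiff f k x ≤ divDiff f k y := by
  set σs : Equiv.Perm (Fin (k + 1)) := Tuple.sort (fun i => -(x i)) with hσs
  set x' : Fin (k + 1) → ℝ := x ∘ σs with hx'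
  set y' : Fin (k + 1) → ℝ := y ∘ σs with hy'
  have hx'inj : Function.Injective x' := hx.comp σs.injective
  have hy'inj : Function.Injective y' := hy.comp σs.injective
  have hanti : StrictAnti x' := by
    have hmono : Monotone ((fun i => -(x i)) ∘ σs) := Tuple.monotone_sort _
    have hinj : Function.Injective ((fun i => -(x i)) ∘ σs) :=
      (neg_injective.comp hx).comp σs.injective
    have hsm := hmono.strictMono_of_injective hinj
    intro p q hpq
    have := hsm hpq
    simp only [Function.comp_apply] at this
    rw [hx']
    simp only [Function.comp_apply]
    linarith
  have hxy' : ∀ i, x' i < y' i := fun i => hxy (σs i)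
  set z : ℕ → Fin (k + 1) → ℝ := fun m i => if (i : ℕ) < m then y' i else x' i with hz
  have claim : ∀ m, m ≤ k + 1 → dds f k x' ≤ dds f k (z m) := by
    intro m
    induction m with
    | zero =>
        intro _
        have : z 0 = x' := by funext i; simp [hz]
        rw [this]
    | succ m ih =>
        intro hm
        have hm' : m ≤ k + 1 := by omega
        have hmk : m < k + 1 := by omega
        set im : Fin (k + 1) := ⟨m, hmk⟩ with him
        have hupdate : z (m + 1) = Function.update (z m) im (y' im) := by
          funext i
          rcases eq_or_ne i im with rfl | hi
          · simp [hz, Function.update_self, him]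
          · have hmne : (i : ℕ) ≠ m := fun h => hi (Fin.ext h)
            rw [Function.update_of_ne hi]
            simp only [hz]
            have : ((i : ℕ) < m + 1) ↔ ((i : ℕ) < m) := by omega
            rw [if_congr this rfl rfl]
        have huinj : Function.Injective (z m) := by
          intro p q h
          simp only [hz] at h
          by_cases hp : (p : ℕ) < m <;> by_cases hq : (q : ℕ) < m
          · rw [if_pos hp, if_pos hq] at h; exact hy'inj h
          · rw [if_pos hp, if_neg hq] at h
            exfalso
            have hpq : p < q ∨ p = q ∨ q < p := lt_trichotomy p q
            have h1 : x' q ≤ x' p := by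
              rcases lt_trichotomy p q with h2 | h2 | h2
              · exact (hanti h2).le
              · rw [h2]
              · exfalso; exact lt_asymm hp (lt_of_le_of_lt (Nat.le_of_not_lt hq) (by exact_mod_cast h2))
            linarith [hxy' p]
          · rw [if_neg hp, if_pos hq] at h
            exfalso
            have h1 : x' p ≤ x' q := by
              rcases lt_trichotomy p q with h2 | h2 | h2
              · exfalso; exact lt_asymm hq (lt_of_le_of_lt (Nat.le_of_not_lt hp) (by exact_mod_cast h2))
              · rw [h2]
              · exact (hanti h2).le
            linarith [hxy' q]
          · rw [if_neg hp, if_neg hq] at h; exact hx'inj h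
        have huim : z m im = x' im := by simp [hz, him]
        have hcm : ∀ j, j ≠ im → y' im ≠ z m j := by
          intro j hj
          simp only [hz]
          by_cases hjm : (j : ℕ) < m
          · rw [if_pos hjm]
            exact fun h => hj (hy'inj h.symm)
          · rw [if_neg hjm]
            have hgt : im < j := by
              have : (j : ℕ) ≠ m := fun h => hj (Fin.ext h)
              have : m < (j : ℕ) := by omega
              exact this
            have := hanti hgt
            have := hxy' im
            linarith
        have hmemu : ∀ j, z m j ∈ Set.Ioo a b := by
          intro j
          simp only [hz]
          split
          · exact hym (σs j)
          · exact hxm (σs j)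
        calc dds f k x' ≤ dds f k (z m) := ih hm'
          _ ≤ dds f k (Function.update (z m) im (y' im)) := by
              refine dds_step f a b k htone (z m) im (y' im) huinj ?_ hcm hmemu (hym (σs im))
              rw [huim]; exact hxy' im
          _ = dds f k (z (m + 1)) := by rw [hupdate]
  have hfin : z (k + 1) = y' := by
    funext i
    simp [hz, i.isLt]
  have hmain : dds f k x' ≤ dds f k y' := by
    have := claim (k + 1) le_rfl
    rwa [hfin] at this
  rw [divDiff_eq_dds f k x hx, divDiff_eq_dds f k y hy]
  calc dds f k x = dds f k x' := (dds_perm f k σs x).symm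
    _ ≤ dds f k y' := hmain
    _ = dds f k y := dds_perm f k σs y
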